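/- arXiv:2001.03029 — 2 statements merged into one kernel-verified Lean document; each statement's English description precedes it below -/
import Mathlib

section
/- Let $Y$ be the limit of the pathwise $\varepsilon$-approximations, and let $\beta_0 = \sup\{t>0 : \forall s\in[0,t), Y(s)>0\}$ be the first zero of $Y$ (assume $\beta_0<\infty$). Then $\lim_{t\to\beta_0-}Y(t)=Y(\beta_0)=0$ and for all $t\in[0,\beta_0]$: $Y(t) = Y_0 + \int_0^t \frac{k}{Y(s)}\,ds - a\int_0^t Y(s)\,ds + \sigma g(t)$. -/
open Filter Topology MeasureTheory Set

namespace CIRproof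

variable {Y₀ k a σ : ℝ} {g : ℝ → ℝ} {Y : ℝ → ℝ → ℝ} {Ylim : ℝ → ℝ}

lemma cont_integrand {ε : ℝ} (hε : 0 < ε) (hc : Continuous (Y ε)) :
    Continuous fun s => k / (max (Y ε s) 0 + ε) := by
  refine continuous_const.div ((hc.max continuous_const).add continuous_const) ?_
  intro s
  have : 0 < max (Y ε s) 0 + ε := add_pos_of_nonneg_of_pos (le_max_right _ _) hε
  exact this.ne'

lemma Ydiff (hYc : ∀ ε : ℝ, 0 < ε → Continuous (Y ε))
    (hYeq : ∀ ε : ℝ, 0 < ε → ∀ t : ℝ, 0 ≤ t →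
      Y ε t = Y₀ + (∫ s in (0:ℝ)..t, k / (max (Y ε s) 0 + ε))
        - a * (∫ s in (0:ℝ)..t, Y ε s) + σ * g t)
    {ε u t : ℝ} (hε : 0 < ε) (hu : 0 ≤ u) (hut : u ≤ t) :
    Y ε t - Y ε u = (∫ s in u..t, k / (max (Y ε s) 0 + ε))
      - a * (∫ s in u..t, Y ε s) + σ * (g t - g u) := by
  have hci : Continuous fun s => k / (max (Y ε s) 0 + ε) := cont_integrand hε (hYc ε hε)
  have h1 := intervalIntegral.integral_add_adjacent_intervals
    (hci.intervalIntegrable (μ := volume) 0 u) (hci.intervalIntegrable (μ := volume) u t)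
  have h2 := intervalIntegral.integral_add_adjacent_intervals
    ((hYc ε hε).intervalIntegrable (μ := volume) 0 u) ((hYc ε hε).intervalIntegrable (μ := volume) u t)
  rw [hYeq ε hε t (hu.trans hut), hYeq ε hε u hu, ← h1, ← h2]
  ring

lemma Yzero (hg0 : g 0 = 0)
    (hYeq : ∀ ε : ℝ, 0 < ε → ∀ t : ℝ, 0 ≤ t →
      Y ε t = Y₀ + (∫ s in (0:ℝ)..t, k / (max (Y ε s) 0 + ε))
        - a * (∫ s in (0:ℝ)..t, Y ε s) + σ * g t)
    {ε : ℝ} (hε : 0 < ε) : Y ε 0 = Y₀ := by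
  have := hYeq ε hε 0 le_rfl
  simpa [hg0] using this

lemma Ylim_zero (hg0 : g 0 = 0)
    (hYeq : ∀ ε : ℝ, 0 < ε → ∀ t : ℝ, 0 ≤ t →
      Y ε t = Y₀ + (∫ s in (0:ℝ)..t, k / (max (Y ε s) 0 + ε))
        - a * (∫ s in (0:ℝ)..t, Y ε s) + σ * g t)
    (hlim : ∀ t : ℝ, 0 ≤ t → Tendsto (fun ε => Y ε t) (𝓝[>] 0) (𝓝 (Ylim t))) :
    Ylim 0 = Y₀ := by
  refine tendsto_nhds_unique (hlim 0 le_rfl) ?_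
  refine Tendsto.congr' ?_ (tendsto_const_nhds (α := ℝ) (f := 𝓝[>] (0:ℝ)))
  filter_upwards [self_mem_nhdsWithin] with ε hε
  exact (Yzero hg0 hYeq hε).symm

lemma mono (hg0 : g 0 = 0) (hk : 0 < k) (ha : 0 < a)
    (hYc : ∀ ε : ℝ, 0 < ε → Continuous (Y ε))
    (hYeq : ∀ ε : ℝ, 0 < ε → ∀ t : ℝ, 0 ≤ t →
      Y ε t = Y₀ + (∫ s in (0:ℝ)..t, k / (max (Y ε s) 0 + ε))
        - a * (∫ s in (0:ℝ)..t, Y ε s) + σ * g t)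
    {ε₁ ε₂ : ℝ} (h1 : 0 < ε₁) (h12 : ε₁ ≤ ε₂) {t : ℝ} (ht : 0 ≤ t) :
    Y ε₂ t ≤ Y ε₁ t := by
  have h2 : 0 < ε₂ := lt_of_lt_of_le h1 h12
  by_contra hcon
  push_neg at hcon
  set D : ℝ → ℝ := fun s => Y ε₂ s - Y ε₁ s with hD
  have hDc : Continuous D := (hYc ε₂ h2).sub (hYc ε₁ h1)
  have hD0 : D 0 = 0 := by simp [hD, Yzero hg0 hYeq h1, Yzero hg0 hYeq h2]
  have hDt : 0 < D t := sub_pos.2 hcon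
  have ht0 : 0 < t := by
    rcases eq_or_lt_of_le ht with h | h
    · exfalso; rw [← h] at hDt; rw [hD0] at hDt; exact lt_irrefl 0 hDt
    · exact h
  set S : Set ℝ := Icc 0 t ∩ {s | D s ≤ 0} with hS
  have hS0 : (0:ℝ) ∈ S := ⟨⟨le_rfl, ht⟩, hD0.le⟩
  have hSb : BddAbove S := ⟨t, fun s hs => hs.1.2⟩
  have hScl : IsClosed S := isClosed_Icc.inter (isClosed_le hDc continuous_const)
  set u := sSup S with hu
  have huS : u ∈ S := hScl.csSup_mem ⟨0, hS0⟩ hSb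
  have hu0 : 0 ≤ u := huS.1.1
  have hut : u ≤ t := huS.1.2
  have hunet : u < t := by
    rcases eq_or_lt_of_le hut with h | h
    · exfalso; rw [h] at huS; exact absurd hDt (not_lt.2 huS.2)
    · exact h
  have hmid : ∀ x, u < x → x ≤ t → 0 < D x := by
    intro x hux hxt
    by_contra hx
    push_neg at hx
    exact absurd (le_csSup hSb ⟨⟨hu0.trans hux.le, hxt⟩, hx⟩) (not_le.2 hux)
  have hDnonneg : ∀ x ∈ Icc u t, 0 ≤ D x := by
    have hcl : closure (Ioo u t) ⊆ {x | 0 ≤ D x} :=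
      closure_minimal (fun x hx => (hmid x hx.1 hx.2.le).le)
        (isClosed_le continuous_const hDc)
    rw [closure_Ioo hunet.ne] at hcl
    exact fun x hx => hcl hx
  have key2 := Ydiff hYc hYeq h2 hu0 hunet.le
  have key1 := Ydiff hYc hYeq h1 hu0 hunet.le
  have hint1 : ∫ s in u..t, k / (max (Y ε₂ s) 0 + ε₂) ≤
      ∫ s in u..t, k / (max (Y ε₁ s) 0 + ε₁) := by
    apply intervalIntegral.integral_mono_on hunet.le
      ((cont_integrand h2 (hYc ε₂ h2)).intervalIntegrable u t)
      ((cont_integrand h1 (hYc ε₁ h1)).intervalIntegrable u t)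
    intro x hx
    have hle : Y ε₁ x ≤ Y ε₂ x := by have := hDnonneg x hx; simp [hD] at this; linarith
    have hd : max (Y ε₁ x) 0 + ε₁ ≤ max (Y ε₂ x) 0 + ε₂ :=
      add_le_add (max_le_max hle le_rfl) h12
    exact div_le_div_of_nonneg_left hk.le (add_pos_of_nonneg_of_pos (le_max_right _ _) h1) hd
  have hint2 : ∫ s in u..t, Y ε₁ s ≤ ∫ s in u..t, Y ε₂ s := by
    apply intervalIntegral.integral_mono_on hunet.le
      ((hYc ε₁ h1).intervalIntegrable u t) ((hYc ε₂ h2).intervalIntegrable u t)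
    intro x hx
    have := hDnonneg x hx; simp [hD] at this; linarith
  have hDu : D u ≤ 0 := huS.2
  have hamul : a * ∫ s in u..t, Y ε₁ s ≤ a * ∫ s in u..t, Y ε₂ s :=
    mul_le_mul_of_nonneg_left hint2 ha.le
  have : D t - D u ≤ 0 := by
    have e : D t - D u = ((Y ε₂ t - Y ε₂ u) - (Y ε₁ t - Y ε₁ u)) := by simp [hD]; ring
    rw [e, key2, key1]
    linarith
  linarith

lemma le_lim (hg0 : g 0 = 0) (hk : 0 < k) (ha : 0 < a)
    (hYc : ∀ ε : ℝ, 0 < ε → Continuous (Y ε))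
    (hYeq : ∀ ε : ℝ, 0 < ε → ∀ t : ℝ, 0 ≤ t →
      Y ε t = Y₀ + (∫ s in (0:ℝ)..t, k / (max (Y ε s) 0 + ε))
        - a * (∫ s in (0:ℝ)..t, Y ε s) + σ * g t)
    (hlim : ∀ t : ℝ, 0 ≤ t → Tendsto (fun ε => Y ε t) (𝓝[>] 0) (𝓝 (Ylim t)))
    {ε t : ℝ} (hε : 0 < ε) (ht : 0 ≤ t) : Y ε t ≤ Ylim t := by
  refine ge_of_tendsto (hlim t ht) ?_
  filter_upwards [Ioo_mem_nhdsGT_of_mem (Set.mem_Ico.2 ⟨le_rfl, hε⟩)] with ε' hε'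
  exact mono hg0 hk ha hYc hYeq hε'.1 hε'.2.le ht


lemma cross (hk : 0 < k) (ha : 0 < a)
    (hYc : ∀ ε : ℝ, 0 < ε → Continuous (Y ε))
    (hYeq : ∀ ε : ℝ, 0 < ε → ∀ t : ℝ, 0 ≤ t →
      Y ε t = Y₀ + (∫ s in (0:ℝ)..t, k / (max (Y ε s) 0 + ε))
        - a * (∫ s in (0:ℝ)..t, Y ε s) + σ * g t)
    {ε c x₀ s₁ : ℝ} (hε : 0 < ε) (hc : 0 < c) (hx₀ : 0 ≤ x₀) (hxs : x₀ ≤ s₁)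
    (hfu : c ≤ Y ε x₀) (hfv : Y ε s₁ ≤ c/2) :
    ∃ u v, x₀ ≤ u ∧ u < v ∧ v ≤ s₁ ∧ (∀ x ∈ Icc u v, c/2 ≤ Y ε x ∧ Y ε x ≤ c) ∧
      c/2 ≤ a*c*(v-u) + σ*(g u - g v) := by
  have hfc : Continuous (Y ε) := hYc ε hε
  set A : Set ℝ := Icc x₀ s₁ ∩ {x | Y ε x ≤ c/2} with hA
  have hAne : s₁ ∈ A := ⟨⟨hxs, le_rfl⟩, hfv⟩
  have hAcl : IsClosed A := isClosed_Icc.inter (isClosed_le hfc continuous_const)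
  have hAbd : BddBelow A := ⟨x₀, fun x hx => hx.1.1⟩
  set v := sInf A with hv
  have hvA : v ∈ A := hAcl.csInf_mem ⟨s₁, hAne⟩ hAbd
  set B : Set ℝ := Icc x₀ v ∩ {x | c ≤ Y ε x} with hB
  have hBne : x₀ ∈ B := ⟨⟨le_rfl, hvA.1.1⟩, hfu⟩
  have hBcl : IsClosed B := isClosed_Icc.inter (isClosed_le continuous_const hfc)
  have hBbd : BddAbove B := ⟨v, fun x hx => hx.1.2⟩
  set u := sSup B with hu'
  have huB : u ∈ B := hBcl.csSup_mem ⟨x₀, hBne⟩ hBbd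
  have hx₀u : x₀ ≤ u := huB.1.1
  have huv' : u ≤ v := huB.1.2
  have hYu : c ≤ Y ε u := huB.2
  have hYv : Y ε v ≤ c/2 := hvA.2
  have huv : u < v := by
    rcases eq_or_lt_of_le huv' with h | h
    · exfalso; rw [h] at hYu; linarith
    · exact h
  have hvs : v ≤ s₁ := hvA.1.2
  have hmid : ∀ x ∈ Ioo u v, c/2 ≤ Y ε x ∧ Y ε x ≤ c := by
    intro x hx
    constructor
    · by_contra hh; push_neg at hh
      have hmem : x ∈ A := ⟨⟨hx₀u.trans hx.1.le, hx.2.le.trans hvs⟩, hh.le⟩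
      exact absurd (csInf_le hAbd hmem) (not_le.2 hx.2)
    · by_contra hh; push_neg at hh
      have hmem : x ∈ B := ⟨⟨hx₀u.trans hx.1.le, hx.2.le⟩, hh.le⟩
      exact absurd (le_csSup hBbd hmem) (not_le.2 hx.1)
  have hIcc : ∀ x ∈ Icc u v, c/2 ≤ Y ε x ∧ Y ε x ≤ c := by
    have hcl : closure (Ioo u v) ⊆ {x | c/2 ≤ Y ε x ∧ Y ε x ≤ c} := by
      refine closure_minimal (fun x hx => hmid x hx) ?_
      exact (isClosed_le continuous_const hfc).inter (isClosed_le hfc continuous_const)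
    rw [closure_Ioo huv.ne] at hcl
    exact fun x hx => hcl hx
  have hu0 : 0 ≤ u := hx₀.trans hx₀u
  have key := Ydiff hYc hYeq hε hu0 huv.le
  have h1 : 0 ≤ ∫ s in u..v, k / (max (Y ε s) 0 + ε) :=
    intervalIntegral.integral_nonneg huv.le
      (fun x _ => div_nonneg hk.le (add_pos_of_nonneg_of_pos (le_max_right _ _) hε).le)
  have h2 : ∫ s in u..v, Y ε s ≤ ∫ _s in u..v, (c : ℝ) :=
    intervalIntegral.integral_mono_on huv.le (hfc.intervalIntegrable (μ := volume) u v)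
      intervalIntegrable_const (fun x hx => (hIcc x hx).2)
  rw [intervalIntegral.integral_const, smul_eq_mul] at h2
  have h3 : a * (∫ s in u..v, Y ε s) ≤ a * ((v-u) * c) := mul_le_mul_of_nonneg_left h2 ha.le
  refine ⟨u, v, hx₀u, huv, hvs, hIcc, ?_⟩
  have e1 : a*((v-u)*c) = a*c*(v-u) := by ring
  have e2 : σ*(g u - g v) = -(σ*(g v - g u)) := by ring
  linarith [key, h1, h3, hYu, hYv]

lemma nonneg (hY₀ : 0 < Y₀) (hk : 0 < k) (ha : 0 < a) (hσ : 0 < σ)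
    (hg : Continuous g) (hg0 : g 0 = 0)
    (hYc : ∀ ε : ℝ, 0 < ε → Continuous (Y ε))
    (hYeq : ∀ ε : ℝ, 0 < ε → ∀ t : ℝ, 0 ≤ t →
      Y ε t = Y₀ + (∫ s in (0:ℝ)..t, k / (max (Y ε s) 0 + ε))
        - a * (∫ s in (0:ℝ)..t, Y ε s) + σ * g t)
    (hlim : ∀ t : ℝ, 0 ≤ t → Tendsto (fun ε => Y ε t) (𝓝[>] 0) (𝓝 (Ylim t)))
    {t : ℝ} (ht : 0 ≤ t) : 0 ≤ Ylim t := by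
  rcases eq_or_lt_of_le ht with h | ht0
  · rw [← h, Ylim_zero hg0 hYeq hlim]; exact hY₀.le
  by_contra hcon
  push_neg at hcon
  obtain ⟨G₀, hG₀⟩ := isCompact_Icc.exists_bound_of_continuousOn
    (s := Icc (0:ℝ) t) hg.continuousOn
  set G := max G₀ 0 with hG
  have hGnn : (0:ℝ) ≤ G := le_max_right _ _
  have hGb : ∀ x ∈ Icc (0:ℝ) t, |g x| ≤ G := fun x hx => (hG₀ x hx).trans (le_max_left _ _)
  set c := Ylim t / 2 with hc
  have hcneg : c < 0 := div_neg_of_neg_of_pos hcon two_pos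
  have hlt : Ylim t < c := by
    have h2 : Ylim t = 2*c := by rw [hc]; ring
    linarith
  obtain ⟨η, hη, hmod⟩ := Metric.continuous_iff.1 hg t ((-c)/σ) (div_pos (neg_pos.2 hcneg) hσ)
  set R := max (c + 2*σ*G) 1 with hR
  have hRpos : (0:ℝ) < R := lt_of_lt_of_le one_pos (le_max_right _ _)
  have hev1 : ∀ᶠ ε in 𝓝[>] (0:ℝ), Y ε t < c := (hlim t ht).eventually (gt_mem_nhds hlt)
  have hev2 : ∀ᶠ ε in 𝓝[>] (0:ℝ), ε ∈ Ioo (0:ℝ) (η*k/R) :=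
    eventually_of_mem (Ioo_mem_nhdsGT_of_mem (Set.mem_Ico.2 ⟨le_rfl, div_pos (mul_pos hη hk) hRpos⟩))
      (fun x h => h)
  obtain ⟨ε, hεY, hε, hεR⟩ := (hev1.and hev2).exists
  set B : Set ℝ := Icc 0 t ∩ {x | 0 ≤ Y ε x} with hB
  have hB0 : (0:ℝ) ∈ B := ⟨⟨le_rfl, ht⟩, by simp only [mem_setOf_eq]; rw [Yzero hg0 hYeq hε]; exact hY₀.le⟩
  have hBcl : IsClosed B := isClosed_Icc.inter (isClosed_le continuous_const (hYc ε hε))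
  have hBbd : BddAbove B := ⟨t, fun x hx => hx.1.2⟩
  set u := sSup B with hu'
  have huB : u ∈ B := hBcl.csSup_mem ⟨0, hB0⟩ hBbd
  have hu0 : 0 ≤ u := huB.1.1
  have hut : u ≤ t := huB.1.2
  have hYu : 0 ≤ Y ε u := huB.2
  have hunet : u < t := by
    rcases eq_or_lt_of_le hut with h | h
    · exfalso; rw [h] at hYu; linarith
    · exact h
  have hneg : ∀ x ∈ Ioo u t, Y ε x ≤ 0 := by
    intro x hx; by_contra hh; push_neg at hh
    exact absurd (le_csSup hBbd ⟨⟨hu0.trans hx.1.le, hx.2.le⟩, hh.le⟩) (not_le.2 hx.1)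
  have hnegIcc : ∀ x ∈ Icc u t, Y ε x ≤ 0 := by
    have hcl : closure (Ioo u t) ⊆ {x | Y ε x ≤ 0} :=
      closure_minimal (fun x hx => hneg x hx) (isClosed_le (hYc ε hε) continuous_const)
    rw [closure_Ioo hunet.ne] at hcl
    exact fun x hx => hcl hx
  have hmax : ∀ x ∈ uIcc u t, k / (max (Y ε x) 0 + ε) = k/ε := by
    intro x hx
    rw [uIcc_of_le hunet.le] at hx
    rw [max_eq_right (hnegIcc x hx), zero_add]
  have hIconst : ∫ s in u..t, k / (max (Y ε s) 0 + ε) = (t - u) * (k/ε) := by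
    rw [intervalIntegral.integral_congr hmax, intervalIntegral.integral_const, smul_eq_mul]
  have hInt2 : ∫ s in u..t, Y ε s ≤ 0 := by
    have h0 := intervalIntegral.integral_mono_on hunet.le
      ((hYc ε hε).intervalIntegrable (μ := volume) u t)
      (intervalIntegrable_const (c := (0:ℝ))) hnegIcc
    simpa using h0
  have ha2 : a * ∫ s in u..t, Y ε s ≤ 0 := by
    have := mul_le_mul_of_nonneg_left hInt2 ha.le
    simpa using this
  have key := Ydiff hYc hYeq hε hu0 hunet.le
  rw [hIconst] at key
  have hgu := abs_le.1 (hGb u ⟨hu0, hut⟩)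
  have hgt := abs_le.1 (hGb t ⟨ht, le_rfl⟩)
  have h4 : -(2*σ*G) ≤ σ*(g t - g u) := by nlinarith [hσ.le]
  have hstep1 : (t-u)*(k/ε) < c + 2*σ*G := by linarith [key, hεY, hYu]
  have hstep2 : t - u < η := by
    have hRge : c + 2*σ*G ≤ R := le_max_left _ _
    have h6 : (t-u)*k < R*ε := by
      have h6a := mul_lt_mul_of_pos_right (lt_of_lt_of_le hstep1 hRge) hε
      calc (t-u)*k = ((t-u)*(k/ε))*ε := by field_simp
        _ < R*ε := h6a
    have h7 : R*ε < η*k := by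
      have h7a := mul_lt_mul_of_pos_left hεR hRpos
      calc R*ε < R*(η*k/R) := h7a
        _ = η*k := by field_simp
    exact lt_of_mul_lt_mul_right (by linarith) hk.le
  have hgub : c < σ*(g t - g u) := by
    have hd : dist u t < η := by
      rw [Real.dist_eq, abs_sub_comm, abs_of_nonneg (by linarith)]; linarith
    have hmd := hmod u hd
    rw [Real.dist_eq] at hmd
    have h9 := (abs_lt.1 hmd).2
    have hnd : -c/σ = -(c/σ) := neg_div σ c
    have h10 : c/σ < g t - g u := by linarith
    calc c = σ*(c/σ) := by field_simp
      _ < σ*(g t - g u) := mul_lt_mul_of_pos_left h10 hσ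
  have hfin : 0 ≤ (t-u)*(k/ε) := mul_nonneg (by linarith) (by positivity)
  linarith [key, hεY, hYu]

lemma pos_before {β₀ : ℝ}
    (hβ₀ : IsLUB {t : ℝ | 0 < t ∧ ∀ s ∈ Set.Ico (0:ℝ) t, 0 < Ylim s} β₀)
    {r : ℝ} (hr0 : 0 ≤ r) (hrβ : r < β₀) : 0 < Ylim r := by
  by_contra h
  push_neg at h
  have hub : r ∈ upperBounds {t : ℝ | 0 < t ∧ ∀ s ∈ Set.Ico (0:ℝ) t, 0 < Ylim s} := by
    intro x hx
    by_contra hxr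
    push_neg at hxr
    exact absurd (hx.2 r ⟨hr0, hxr⟩) (not_lt.2 h)
  exact absurd (hβ₀.2 hub) (not_le.2 hrβ)

lemma at_beta_le (hg0 : g 0 = 0) (hk : 0 < k) (ha : 0 < a)
    (hYc : ∀ ε : ℝ, 0 < ε → Continuous (Y ε))
    (hYeq : ∀ ε : ℝ, 0 < ε → ∀ t : ℝ, 0 ≤ t →
      Y ε t = Y₀ + (∫ s in (0:ℝ)..t, k / (max (Y ε s) 0 + ε))
        - a * (∫ s in (0:ℝ)..t, Y ε s) + σ * g t)
    (hlim : ∀ t : ℝ, 0 ≤ t → Tendsto (fun ε => Y ε t) (𝓝[>] 0) (𝓝 (Ylim t)))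
    {β₀ : ℝ} (hβ₀pos : 0 < β₀)
    (hβ₀ : IsLUB {t : ℝ | 0 < t ∧ ∀ s ∈ Set.Ico (0:ℝ) t, 0 < Ylim s} β₀) :
    (∀ ε, 0 < ε → Y ε β₀ ≤ 0) ∧ Ylim β₀ ≤ 0 := by
  have hseq : ∀ n : ℕ, ∃ s, β₀ ≤ s ∧ s < β₀ + 1/((n:ℝ)+1) ∧ Ylim s ≤ 0 := by
    intro n
    have hp : (0:ℝ) < 1/((n:ℝ)+1) := by positivity
    have hnot : β₀ + 1/((n:ℝ)+1) ∉
        {t : ℝ | 0 < t ∧ ∀ s ∈ Set.Ico (0:ℝ) t, 0 < Ylim s} := by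
      intro hmem
      exact absurd (hβ₀.1 hmem) (by push_neg; linarith)
    simp only [mem_setOf_eq, not_and] at hnot
    have h2 := hnot (by linarith)
    push_neg at h2
    obtain ⟨s, hs1, hs2⟩ := h2
    rw [mem_Ico] at hs1
    refine ⟨s, ?_, hs1.2, hs2⟩
    by_contra hsb
    push_neg at hsb
    exact absurd (pos_before hβ₀ hs1.1 hsb) (not_lt.2 hs2)
  choose sq hsq1 hsq2 hsq3 using hseq
  have hupper : Tendsto (fun n : ℕ => β₀ + 1/((n:ℝ)+1)) atTop (𝓝 β₀) := by
    have h1 := tendsto_one_div_add_atTop_nhds_zero_nat (𝕜 := ℝ)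
    simpa using (tendsto_const_nhds : Tendsto (fun _ : ℕ => β₀) atTop (𝓝 β₀)).add h1
  have hsqlim : Tendsto sq atTop (𝓝 β₀) :=
    tendsto_of_tendsto_of_tendsto_of_le_of_le tendsto_const_nhds hupper hsq1
      (fun n => (hsq2 n).le)
  have hYεβ : ∀ ε, 0 < ε → Y ε β₀ ≤ 0 := by
    intro ε hε
    have hcv : Tendsto (fun n => Y ε (sq n)) atTop (𝓝 (Y ε β₀)) :=
      ((hYc ε hε).tendsto β₀).comp hsqlim
    refine le_of_tendsto hcv (Eventually.of_forall fun n => ?_)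
    exact le_trans (le_lim hg0 hk ha hYc hYeq hlim hε (le_trans hβ₀pos.le (hsq1 n))) (hsq3 n)
  refine ⟨hYεβ, ?_⟩
  refine le_of_tendsto (hlim β₀ hβ₀pos.le) ?_
  filter_upwards [self_mem_nhdsWithin] with ε hε
  exact hYεβ ε hε


lemma tendsto_zero (hY₀ : 0 < Y₀) (hk : 0 < k) (ha : 0 < a) (hσ : 0 < σ)
    (hg : Continuous g) (hg0 : g 0 = 0)
    (hYc : ∀ ε : ℝ, 0 < ε → Continuous (Y ε))
    (hYeq : ∀ ε : ℝ, 0 < ε → ∀ t : ℝ, 0 ≤ t →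
      Y ε t = Y₀ + (∫ s in (0:ℝ)..t, k / (max (Y ε s) 0 + ε))
        - a * (∫ s in (0:ℝ)..t, Y ε s) + σ * g t)
    (hlim : ∀ t : ℝ, 0 ≤ t → Tendsto (fun ε => Y ε t) (𝓝[>] 0) (𝓝 (Ylim t)))
    {β₀ : ℝ} (hβ₀pos : 0 < β₀)
    (hβ₀ : IsLUB {t : ℝ | 0 < t ∧ ∀ s ∈ Set.Ico (0:ℝ) t, 0 < Ylim s} β₀) :
    Tendsto Ylim (𝓝[<] β₀) (𝓝 0) := by
  have hkey : ∀ c : ℝ, 0 < c →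
      ∃ t₁, 0 ≤ t₁ ∧ t₁ < β₀ ∧ ∀ x, t₁ < x → x < β₀ → Ylim x < c := by
    intro c hc
    by_contra hcon
    push_neg at hcon
    obtain ⟨η, hη, hmod⟩ := Metric.uniformContinuousOn_iff.1
      (isCompact_Icc.uniformContinuousOn_of_continuous (s := Icc (0:ℝ) β₀) hg.continuousOn)
      (c/(16*σ)) (by positivity)
    set η₂ := min (η/2) (1/(8*a)) with hη₂
    have hη₂pos : 0 < η₂ := lt_min (by positivity) (by positivity)
    set t₁ := max (β₀ - η₂) 0 with ht₁
    have ht₁0 : 0 ≤ t₁ := le_max_right _ _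
    have ht₁β : t₁ < β₀ := max_lt (by linarith) hβ₀pos
    obtain ⟨x, hx1, hx2, hx3⟩ := hcon t₁ ht₁0 ht₁β
    have hx0 : 0 ≤ x := le_trans ht₁0 hx1.le
    have hev1 : ∀ᶠ ε in 𝓝[>] (0:ℝ), c/2 < Y ε x :=
      (hlim x hx0).eventually (lt_mem_nhds (show c/2 < Ylim x by linarith))
    obtain ⟨ε, hεY, hε⟩ := (hev1.and self_mem_nhdsWithin).exists
    have hYβ := (at_beta_le hg0 hk ha hYc hYeq hlim hβ₀pos hβ₀).1 ε hε
    obtain ⟨u, v, hu1, huv, hv1, hcorr, hineq⟩ :=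
      cross hk ha hYc hYeq hε (show (0:ℝ) < c/2 by linarith) hx0 hx2.le
        hεY.le (show Y ε β₀ ≤ (c/2)/2 by linarith)
    have huIcc : u ∈ Icc (0:ℝ) β₀ := ⟨le_trans hx0 hu1, le_trans huv.le hv1⟩
    have hvIcc : v ∈ Icc (0:ℝ) β₀ := ⟨le_trans huIcc.1 huv.le, hv1⟩
    have hvu : v - u ≤ η₂ := by
      have h1 : t₁ ≤ u := le_trans hx1.le hu1
      have h2 : β₀ - η₂ ≤ t₁ := le_max_left _ _
      linarith [hv1]
    have hd : dist u v < η := by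
      rw [Real.dist_eq, abs_sub_comm, abs_of_nonneg (by linarith)]
      have h3 : η₂ ≤ η/2 := min_le_left _ _
      linarith
    have hgd := hmod u huIcc v hvIcc hd
    rw [Real.dist_eq] at hgd
    have hgd2 : σ*(g u - g v) < c/16 := by
      have h5 : g u - g v ≤ |g u - g v| := le_abs_self _
      have h6 : σ*(g u - g v) ≤ σ*|g u - g v| := mul_le_mul_of_nonneg_left h5 hσ.le
      have h7 : σ*|g u - g v| < σ*(c/(16*σ)) := mul_lt_mul_of_pos_left hgd hσ
      have h8 : σ*(c/(16*σ)) = c/16 := by field_simp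
      linarith
    have hca : a*(c/2)*(v-u) ≤ c/16 := by
      have h9 : η₂ ≤ 1/(8*a) := min_le_right _ _
      have hvu0 : 0 ≤ v - u := by linarith
      have h10 : a*(c/2)*(v-u) ≤ a*(c/2)*(1/(8*a)) :=
        mul_le_mul_of_nonneg_left (le_trans hvu h9) (by positivity)
      have he : a*(c/2)*(1/(8*a)) = c/16 := by field_simp; ring
      linarith
    linarith
  rw [Metric.tendsto_nhds]
  intro c hc
  obtain ⟨t₁, h0, h1, h2⟩ := hkey c hc
  filter_upwards [Ioo_mem_nhdsLT_of_mem (Set.mem_Ioc.2 ⟨h1, le_rfl⟩)] with x hx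
  have hx0 : 0 ≤ x := le_trans h0 hx.1.le
  rw [Real.dist_eq, sub_zero, abs_of_nonneg (nonneg hY₀ hk ha hσ hg hg0 hYc hYeq hlim hx0)]
  exact h2 x hx.1 hx.2

lemma aemeasYlim
    (hYc : ∀ ε : ℝ, 0 < ε → Continuous (Y ε))
    (hlim : ∀ t : ℝ, 0 ≤ t → Tendsto (fun ε => Y ε t) (𝓝[>] 0) (𝓝 (Ylim t)))
    {T : ℝ} :
    AEMeasurable Ylim (volume.restrict (Ioc 0 T)) := by
  have hn : ∀ n : ℕ, AEMeasurable (Y (1/((n:ℝ)+1))) (volume.restrict (Ioc 0 T)) :=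
    fun n => ((hYc (1/((n:ℝ)+1)) (by positivity)).measurable).aemeasurable
  refine aemeasurable_of_tendsto_metrizable_ae atTop hn ?_
  rw [ae_restrict_iff' measurableSet_Ioc]
  refine Eventually.of_forall fun x hx => ?_
  have h1 : Tendsto (fun n : ℕ => 1/((n:ℝ)+1)) atTop (𝓝[>] (0:ℝ)) := by
    rw [tendsto_nhdsWithin_iff]
    exact ⟨tendsto_one_div_add_atTop_nhds_zero_nat,
      Eventually.of_forall fun n => Set.mem_Ioi.2 (by positivity)⟩
  exact (hlim x hx.1.le).comp h1

lemma integrableOn_of_bounded {f : ℝ → ℝ} {T C : ℝ}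
    (hm : AEMeasurable f (volume.restrict (Ioc 0 T)))
    (hb : ∀ s ∈ Ioc (0:ℝ) T, |f s| ≤ C) : IntegrableOn f (Ioc 0 T) := by
  refine ⟨hm.aestronglyMeasurable, ?_⟩
  refine HasFiniteIntegral.restrict_of_bounded (C := C) measure_Ioc_lt_top ?_
  rw [ae_restrict_iff' measurableSet_Ioc]
  exact Eventually.of_forall fun x hx => by simpa [Real.norm_eq_abs] using hb x hx

lemma pos_min (hg0 : g 0 = 0) (hk : 0 < k) (ha : 0 < a)
    (hYc : ∀ ε : ℝ, 0 < ε → Continuous (Y ε))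
    (hYeq : ∀ ε : ℝ, 0 < ε → ∀ t : ℝ, 0 ≤ t →
      Y ε t = Y₀ + (∫ s in (0:ℝ)..t, k / (max (Y ε s) 0 + ε))
        - a * (∫ s in (0:ℝ)..t, Y ε s) + σ * g t)
    (hlim : ∀ t : ℝ, 0 ≤ t → Tendsto (fun ε => Y ε t) (𝓝[>] 0) (𝓝 (Ylim t)))
    {T : ℝ} (hT : 0 ≤ T)
    (hpos : ∀ s ∈ Icc (0:ℝ) T, 0 < Ylim s) :
    ∃ δ > 0, ∀ s ∈ Icc (0:ℝ) T, δ ≤ Ylim s := by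
  by_contra hcon
  push_neg at hcon
  have hex : ∀ n : ℕ, ∃ s, s ∈ Icc (0:ℝ) T ∧ Ylim s < 1/((n:ℝ)+1) := by
    intro n
    obtain ⟨s, hs1, hs2⟩ := hcon (1/((n:ℝ)+1)) (by positivity)
    exact ⟨s, hs1, hs2⟩
  choose sq hsq1 hsq2 using hex
  obtain ⟨xs, hxs, φ, hφ, hφt⟩ := isCompact_Icc.tendsto_subseq hsq1
  have hY0 : ∀ ε, 0 < ε → Y ε xs ≤ 0 := by
    intro ε hε
    have h1 : Tendsto (fun n => Y ε (sq (φ n))) atTop (𝓝 (Y ε xs)) :=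
      ((hYc ε hε).tendsto _).comp hφt
    have h2 : Tendsto (fun n => 1/(((φ n : ℕ):ℝ)+1)) atTop (𝓝 0) :=
      tendsto_one_div_add_atTop_nhds_zero_nat.comp hφ.tendsto_atTop
    refine le_of_tendsto_of_tendsto' h1 h2 fun n => ?_
    exact le_trans (le_lim hg0 hk ha hYc hYeq hlim hε (hsq1 (φ n)).1) (hsq2 (φ n)).le
  have hle : Ylim xs ≤ 0 := by
    refine le_of_tendsto (hlim xs hxs.1) ?_
    filter_upwards [self_mem_nhdsWithin] with ε hε
    exact hY0 ε hε
  exact absurd (hpos xs hxs) (not_lt.2 hle)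


lemma lowbd (hY₀ : 0 < Y₀) (hk : 0 < k) (ha : 0 < a) (hσ : 0 < σ)
    (hg : Continuous g) (hg0 : g 0 = 0)
    (hYc : ∀ ε : ℝ, 0 < ε → Continuous (Y ε))
    (hYeq : ∀ ε : ℝ, 0 < ε → ∀ t : ℝ, 0 ≤ t →
      Y ε t = Y₀ + (∫ s in (0:ℝ)..t, k / (max (Y ε s) 0 + ε))
        - a * (∫ s in (0:ℝ)..t, Y ε s) + σ * g t)
    (hlim : ∀ t : ℝ, 0 ≤ t → Tendsto (fun ε => Y ε t) (𝓝[>] 0) (𝓝 (Ylim t)))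
    {T : ℝ} (hT : 0 ≤ T)
    (hpos : ∀ s ∈ Icc (0:ℝ) T, 0 < Ylim s) :
    ∃ δ > 0, ∃ ε₀ > 0, ∃ M : ℝ,
      (∀ s ∈ Icc (0:ℝ) T, δ ≤ Ylim s ∧ Ylim s ≤ M) ∧
      (∀ ε, 0 < ε → ε < ε₀ → ∀ s ∈ Icc (0:ℝ) T, δ/4 ≤ Y ε s ∧ Y ε s ≤ M) := by
  obtain ⟨δ, hδ, hδle⟩ := pos_min hg0 hk ha hYc hYeq hlim hT hpos
  obtain ⟨η, hη, hmod⟩ := Metric.uniformContinuousOn_iff.1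
    (isCompact_Icc.uniformContinuousOn_of_continuous (s := Icc (0:ℝ) T) hg.continuousOn)
    (δ/(16*σ)) (by positivity)
  set h₀ := min (η/2) (1/(8*a)) with hh₀
  have hh₀pos : 0 < h₀ := lt_min (by positivity) (by positivity)
  have claimA : ∀ ε, 0 < ε → ∀ s ∈ Icc (0:ℝ) T, Y ε s ≤ δ/4 →
      ∃ u v, 0 ≤ u ∧ u < v ∧ v ≤ T ∧ h₀ ≤ v - u ∧ ∀ x ∈ Icc u v, Y ε x ≤ δ/2 := by
    intro ε hε s hs hbad
    have hY0' : δ/2 ≤ Y ε 0 := by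
      rw [Yzero hg0 hYeq hε]
      have h1 := hδle 0 ⟨le_rfl, hT⟩
      rw [Ylim_zero hg0 hYeq hlim] at h1
      linarith
    obtain ⟨u, v, hu1, huv, hv1, hcorr, hineq⟩ :=
      cross hk ha hYc hYeq hε (show (0:ℝ) < δ/2 by linarith) le_rfl hs.1
        hY0' (show Y ε s ≤ (δ/2)/2 by linarith)
    refine ⟨u, v, hu1, huv, le_trans hv1 hs.2, ?_, fun x hx => (hcorr x hx).2⟩
    by_contra hlen
    push_neg at hlen
    have huI : u ∈ Icc (0:ℝ) T := ⟨hu1, le_trans huv.le (le_trans hv1 hs.2)⟩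
    have hvI : v ∈ Icc (0:ℝ) T := ⟨le_trans hu1 huv.le, le_trans hv1 hs.2⟩
    have hd : dist u v < η := by
      rw [Real.dist_eq, abs_sub_comm, abs_of_nonneg (by linarith)]
      have h3 := min_le_left (η/2) (1/(8*a))
      have h4 : h₀ ≤ η/2 := by rw [hh₀]; exact h3
      linarith
    have hgd := hmod u huI v hvI hd
    rw [Real.dist_eq] at hgd
    have hgd2 : σ*(g u - g v) < δ/16 := by
      have h5 : g u - g v ≤ |g u - g v| := le_abs_self _
      have h6 : σ*(g u - g v) ≤ σ*|g u - g v| := mul_le_mul_of_nonneg_left h5 hσ.le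
      have h7 : σ*|g u - g v| < σ*(δ/(16*σ)) := mul_lt_mul_of_pos_left hgd hσ
      have h8 : σ*(δ/(16*σ)) = δ/16 := by field_simp
      linarith
    have hca : a*(δ/2)*(v-u) ≤ δ/16 := by
      have h9 : h₀ ≤ 1/(8*a) := min_le_right _ _
      have h10 : a*(δ/2)*(v-u) ≤ a*(δ/2)*(1/(8*a)) :=
        mul_le_mul_of_nonneg_left (by linarith) (by positivity)
      have he : a*(δ/2)*(1/(8*a)) = δ/16 := by field_simp; ring
      linarith
    linarith
  set N := Nat.ceil (T/(h₀/2)) with hN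
  have hgrid : ∃ ε₀ > 0, ∀ ε, 0 < ε → ε < ε₀ → ∀ s ∈ Icc (0:ℝ) T, δ/4 ≤ Y ε s := by
    by_contra hcon
    push_neg at hcon
    have main : ¬ (∀ j : ℕ, j ≤ N → (j:ℝ)*(h₀/2) ≤ T →
        ∃ εj, 0 < εj ∧ ∀ ε, 0 < ε → ε < εj → δ/2 < Y ε ((j:ℝ)*(h₀/2))) := by
      intro hall
      have hunif : ∀ n : ℕ, ∃ ε₁, 0 < ε₁ ∧ ∀ j : ℕ, j ≤ n → j ≤ N → (j:ℝ)*(h₀/2) ≤ T →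
          ∀ ε, 0 < ε → ε < ε₁ → δ/2 < Y ε ((j:ℝ)*(h₀/2)) := by
        intro n
        induction n with
        | zero =>
          obtain ⟨ε₁, hε₁, hprop⟩ := hall 0 (Nat.zero_le _) (by simpa using hT)
          refine ⟨ε₁, hε₁, ?_⟩
          intro j hj hjN hjT ε hε hεlt
          have hj0 : j = 0 := Nat.le_zero.1 hj
          subst hj0
          exact hprop ε hε hεlt
        | succ n ih =>
          obtain ⟨ε₁, hε₁, hp1⟩ := ih
          by_cases hcase : (n+1 ≤ N ∧ ((n:ℝ)+1)*(h₀/2) ≤ T)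
          · obtain ⟨ε₂, hε₂, hp2⟩ := hall (n+1) hcase.1 (by push_cast; exact hcase.2)
            refine ⟨min ε₁ ε₂, lt_min hε₁ hε₂, ?_⟩
            intro j hj hjN hjT ε hε hεlt
            rcases Nat.eq_or_lt_of_le hj with h | h
            · subst h
              have := hp2 ε hε (lt_of_lt_of_le hεlt (min_le_right _ _))
              simpa using this
            · exact hp1 j (Nat.lt_succ_iff.1 h) hjN hjT ε hε
                (lt_of_lt_of_le hεlt (min_le_left _ _))
          · refine ⟨ε₁, hε₁, ?_⟩
            intro j hj hjN hjT ε hε hεlt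
            rcases Nat.eq_or_lt_of_le hj with h | h
            · exfalso
              subst h
              exact hcase ⟨hjN, by push_cast at hjT; exact hjT⟩
            · exact hp1 j (Nat.lt_succ_iff.1 h) hjN hjT ε hε hεlt
      obtain ⟨ε₁, hε₁, hp⟩ := hunif N
      obtain ⟨ε, hε, hεlt, s, hs, hbad⟩ := hcon ε₁ hε₁
      obtain ⟨u, v, hu0, huv, hvT, hlen, hlow⟩ := claimA ε hε s hs hbad.le
      set j := Nat.ceil (u/(h₀/2)) with hj
      have hj1 : u ≤ (j:ℝ)*(h₀/2) := by
        have h1 := Nat.le_ceil (u/(h₀/2))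
        calc u = (u/(h₀/2))*(h₀/2) := by field_simp
          _ ≤ (j:ℝ)*(h₀/2) := mul_le_mul_of_nonneg_right h1 (by positivity)
      have hj2 : (j:ℝ)*(h₀/2) ≤ v := by
        have h2a := Nat.ceil_lt_add_one (show (0:ℝ) ≤ u/(h₀/2) by positivity)
        have h2b : (j:ℝ)*(h₀/2) < (u/(h₀/2)+1)*(h₀/2) :=
          mul_lt_mul_of_pos_right h2a (by positivity)
        have h2c : (u/(h₀/2)+1)*(h₀/2) = u + h₀/2 := by field_simp
        linarith
      have hjT : (j:ℝ)*(h₀/2) ≤ T := le_trans hj2 hvT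
      have hjN : j ≤ N := Nat.ceil_le_ceil (by
        have huT : u ≤ T := le_trans huv.le hvT
        gcongr)
      have hgt := hp j hjN hjN hjT ε hε hεlt
      have hYj : Y ε ((j:ℝ)*(h₀/2)) ≤ δ/2 := hlow _ ⟨hj1, hj2⟩
      linarith
    push_neg at main
    obtain ⟨j, hjN, hjT, hbadj⟩ := main
    have htj0 : (0:ℝ) ≤ (j:ℝ)*(h₀/2) := mul_nonneg (Nat.cast_nonneg _) (by linarith)
    have hall2 : ∀ ε, 0 < ε → Y ε ((j:ℝ)*(h₀/2)) ≤ δ/2 := by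
      intro ε hε
      obtain ⟨ε', hε', hεlt', hY'⟩ := hbadj ε hε
      exact le_trans (mono hg0 hk ha hYc hYeq hε' hεlt'.le htj0) hY'
    have hlim2 : Ylim ((j:ℝ)*(h₀/2)) ≤ δ/2 := by
      refine le_of_tendsto (hlim _ htj0) ?_
      filter_upwards [self_mem_nhdsWithin] with ε hε
      exact hall2 ε hε
    have := hδle _ ⟨htj0, hjT⟩
    linarith
  obtain ⟨ε₀, hε₀, hlb⟩ := hgrid
  obtain ⟨G₀, hG₀⟩ := isCompact_Icc.exists_bound_of_continuousOn
    (s := Icc (0:ℝ) T) hg.continuousOn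
  set G := max G₀ 0 with hGdef
  set M := Y₀ + T*(4*k/δ) + σ*G with hM
  have hub : ∀ ε, 0 < ε → ε < ε₀ → ∀ s ∈ Icc (0:ℝ) T, Y ε s ≤ M := by
    intro ε hε hεlt s hs
    have heq := hYeq ε hε s hs.1
    have hI1 : ∫ x in (0:ℝ)..s, k/(max (Y ε x) 0 + ε) ≤ ∫ _x in (0:ℝ)..s, (4*k/δ) := by
      apply intervalIntegral.integral_mono_on hs.1
        ((cont_integrand hε (hYc ε hε)).intervalIntegrable (μ := volume) 0 s)
        intervalIntegrable_const
      intro x hx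
      have hxI : x ∈ Icc (0:ℝ) T := ⟨hx.1, le_trans hx.2 hs.2⟩
      have h1 := hlb ε hε hεlt x hxI
      have h2 : δ/4 ≤ max (Y ε x) 0 + ε := by
        have h2a := le_max_left (Y ε x) 0
        linarith
      have h3 : k/(max (Y ε x) 0 + ε) ≤ k/(δ/4) :=
        div_le_div_of_nonneg_left hk.le (by linarith) h2
      have h4 : k/(δ/4) = 4*k/δ := by
        rw [div_div_eq_mul_div]; ring_nf
      linarith
    rw [intervalIntegral.integral_const, smul_eq_mul] at hI1
    have hI1' : ∫ x in (0:ℝ)..s, k/(max (Y ε x) 0 + ε) ≤ T*(4*k/δ) := by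
      have h5 : (s-0)*(4*k/δ) ≤ T*(4*k/δ) :=
        mul_le_mul_of_nonneg_right (by linarith [hs.2]) (by positivity)
      linarith
    have hI2 : 0 ≤ ∫ x in (0:ℝ)..s, Y ε x :=
      intervalIntegral.integral_nonneg hs.1
        (fun x hx => le_trans (by linarith) (hlb ε hε hεlt x ⟨hx.1, le_trans hx.2 hs.2⟩))
    have hgs : σ * g s ≤ σ*G :=
      mul_le_mul_of_nonneg_left
        (le_trans (le_abs_self _) ((hG₀ s hs).trans (le_max_left _ _))) hσ.le
    have ham : 0 ≤ a * ∫ x in (0:ℝ)..s, Y ε x := mul_nonneg ha.le hI2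
    rw [hM]
    linarith [heq]
  have hubL : ∀ s ∈ Icc (0:ℝ) T, Ylim s ≤ M := by
    intro s hs
    refine le_of_tendsto (hlim s hs.1) ?_
    filter_upwards [Ioo_mem_nhdsGT_of_mem (Set.mem_Ico.2 ⟨le_rfl, hε₀⟩)] with ε hε
    exact hub ε hε.1 hε.2 s hs
  exact ⟨δ, hδ, ε₀, hε₀, M, fun s hs => ⟨hδle s hs, hubL s hs⟩,
    fun ε hε hεlt s hs => ⟨hlb ε hε hεlt s hs, hub ε hε hεlt s hs⟩⟩


lemma eqOn (hY₀ : 0 < Y₀) (hk : 0 < k) (ha : 0 < a) (hσ : 0 < σ)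
    (hg : Continuous g) (hg0 : g 0 = 0)
    (hYc : ∀ ε : ℝ, 0 < ε → Continuous (Y ε))
    (hYeq : ∀ ε : ℝ, 0 < ε → ∀ t : ℝ, 0 ≤ t →
      Y ε t = Y₀ + (∫ s in (0:ℝ)..t, k / (max (Y ε s) 0 + ε))
        - a * (∫ s in (0:ℝ)..t, Y ε s) + σ * g t)
    (hlim : ∀ t : ℝ, 0 ≤ t → Tendsto (fun ε => Y ε t) (𝓝[>] 0) (𝓝 (Ylim t)))
    {T : ℝ} (hT : 0 ≤ T)
    (hpos : ∀ s ∈ Icc (0:ℝ) T, 0 < Ylim s) :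
    ∀ t ∈ Icc (0:ℝ) T, Ylim t = Y₀ + (∫ s in (0:ℝ)..t, k / Ylim s)
      - a * (∫ s in (0:ℝ)..t, Ylim s) + σ * g t := by
  obtain ⟨δ, hδ, ε₀, hε₀, M, hL, hE⟩ := lowbd hY₀ hk ha hσ hg hg0 hYc hYeq hlim hT hpos
  intro t ht
  have hconv1 : Tendsto (fun ε => ∫ s in (0:ℝ)..t, k/(max (Y ε s) 0 + ε)) (𝓝[>] (0:ℝ))
      (𝓝 (∫ s in (0:ℝ)..t, k/Ylim s)) := by
    apply intervalIntegral.tendsto_integral_filter_of_dominated_convergence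
      (bound := fun _ => k/(δ/4))
    · filter_upwards [self_mem_nhdsWithin] with ε hε
      exact (cont_integrand hε (hYc ε hε)).aestronglyMeasurable
    · filter_upwards [Ioo_mem_nhdsGT_of_mem (Set.mem_Ico.2 ⟨le_rfl, hε₀⟩)] with ε hε
      refine Eventually.of_forall fun x hx => ?_
      rw [uIoc_of_le ht.1] at hx
      have hxI : x ∈ Icc (0:ℝ) T := ⟨hx.1.le, le_trans hx.2 ht.2⟩
      have h1 := (hE ε hε.1 hε.2 x hxI).1
      have h2 : δ/4 ≤ max (Y ε x) 0 + ε := by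
        have h2a := le_max_left (Y ε x) 0
        have := hε.1
        linarith
      have h3 : 0 ≤ k/(max (Y ε x) 0 + ε) := div_nonneg hk.le (by linarith)
      rw [Real.norm_eq_abs, abs_of_nonneg h3]
      exact div_le_div_of_nonneg_left hk.le (by linarith) h2
    · exact intervalIntegrable_const
    · refine Eventually.of_forall fun x hx => ?_
      rw [uIoc_of_le ht.1] at hx
      have hx0 : 0 ≤ x := hx.1.le
      have hxI : x ∈ Icc (0:ℝ) T := ⟨hx0, le_trans hx.2 ht.2⟩
      have hYpos : 0 < Ylim x := lt_of_lt_of_le hδ (hL x hxI).1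
      have hd : Tendsto (fun ε => max (Y ε x) 0 + ε) (𝓝[>] (0:ℝ)) (𝓝 (Ylim x)) := by
        have h1 : Tendsto (fun ε : ℝ => ε) (𝓝[>] (0:ℝ)) (𝓝 0) :=
          tendsto_id.mono_left nhdsWithin_le_nhds
        have h2 : Tendsto (fun ε => max (Y ε x) 0 + ε) (𝓝[>] (0:ℝ))
            (𝓝 (max (Ylim x) 0 + 0)) := ((hlim x hx0).max tendsto_const_nhds).add h1
        simpa [max_eq_left hYpos.le] using h2
      exact tendsto_const_nhds.div hd hYpos.ne'
  have hconv2 : Tendsto (fun ε => ∫ s in (0:ℝ)..t, Y ε s) (𝓝[>] (0:ℝ))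
      (𝓝 (∫ s in (0:ℝ)..t, Ylim s)) := by
    apply intervalIntegral.tendsto_integral_filter_of_dominated_convergence
      (bound := fun _ => M)
    · filter_upwards [self_mem_nhdsWithin] with ε hε
      exact (hYc ε hε).aestronglyMeasurable
    · filter_upwards [Ioo_mem_nhdsGT_of_mem (Set.mem_Ico.2 ⟨le_rfl, hε₀⟩)] with ε hε
      refine Eventually.of_forall fun x hx => ?_
      rw [uIoc_of_le ht.1] at hx
      have hxI : x ∈ Icc (0:ℝ) T := ⟨hx.1.le, le_trans hx.2 ht.2⟩
      obtain ⟨hb1, hb2⟩ := hE ε hε.1 hε.2 x hxI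
      rw [Real.norm_eq_abs, abs_of_nonneg (by linarith)]
      exact hb2
    · exact intervalIntegrable_const
    · refine Eventually.of_forall fun x hx => ?_
      rw [uIoc_of_le ht.1] at hx
      exact hlim x hx.1.le
  have hrhs : Tendsto (fun ε => Y₀ + (∫ s in (0:ℝ)..t, k/(max (Y ε s) 0 + ε))
      - a * (∫ s in (0:ℝ)..t, Y ε s) + σ * g t) (𝓝[>] (0:ℝ))
      (𝓝 (Y₀ + (∫ s in (0:ℝ)..t, k/Ylim s) - a * (∫ s in (0:ℝ)..t, Ylim s) + σ * g t)) :=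
    ((tendsto_const_nhds.add hconv1).sub (hconv2.const_mul a)).add tendsto_const_nhds
  refine tendsto_nhds_unique (hlim t ht.1) (Tendsto.congr' ?_ hrhs)
  filter_upwards [self_mem_nhdsWithin] with ε hε
  exact (hYeq ε hε t ht.1).symm


lemma eq_at_beta (hY₀ : 0 < Y₀) (hk : 0 < k) (ha : 0 < a) (hσ : 0 < σ)
    (hg : Continuous g) (hg0 : g 0 = 0)
    (hYc : ∀ ε : ℝ, 0 < ε → Continuous (Y ε))
    (hYeq : ∀ ε : ℝ, 0 < ε → ∀ t : ℝ, 0 ≤ t →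
      Y ε t = Y₀ + (∫ s in (0:ℝ)..t, k / (max (Y ε s) 0 + ε))
        - a * (∫ s in (0:ℝ)..t, Y ε s) + σ * g t)
    (hlim : ∀ t : ℝ, 0 ≤ t → Tendsto (fun ε => Y ε t) (𝓝[>] 0) (𝓝 (Ylim t)))
    {β₀ : ℝ} (hβ₀pos : 0 < β₀)
    (hβ₀ : IsLUB {t : ℝ | 0 < t ∧ ∀ s ∈ Set.Ico (0:ℝ) t, 0 < Ylim s} β₀)
    (hYβ : Ylim β₀ = 0) :
    Ylim β₀ = Y₀ + (∫ s in (0:ℝ)..β₀, k / Ylim s)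
      - a * (∫ s in (0:ℝ)..β₀, Ylim s) + σ * g β₀ := by
  have hnn : ∀ x : ℝ, 0 ≤ x → 0 ≤ Ylim x := fun x hx =>
    nonneg hY₀ hk ha hσ hg hg0 hYc hYeq hlim hx
  have htend := tendsto_zero hY₀ hk ha hσ hg hg0 hYc hYeq hlim hβ₀pos hβ₀
  have hev : {x : ℝ | Ylim x < 1} ∈ 𝓝[<] β₀ :=
    htend.eventually (gt_mem_nhds (by norm_num : (0:ℝ) < 1))
  obtain ⟨t₂, ht₂, hsub⟩ := mem_nhdsLT_iff_exists_Ioo_subset.1 hev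
  set T₂ := max t₂ 0 with hT₂
  have hT₂0 : 0 ≤ T₂ := le_max_right _ _
  have hT₂β : T₂ < β₀ := max_lt ht₂ hβ₀pos
  have hpos₂ : ∀ s ∈ Icc (0:ℝ) T₂, 0 < Ylim s := fun s hs =>
    pos_before hβ₀ hs.1 (lt_of_le_of_lt hs.2 hT₂β)
  obtain ⟨δ₂, hδ₂, ε₂, hε₂, M₂, hL₂, _⟩ :=
    lowbd hY₀ hk ha hσ hg hg0 hYc hYeq hlim hT₂0 hpos₂
  set Ms := max M₂ 1 with hMs
  have hMs0 : (0:ℝ) ≤ Ms := le_trans zero_le_one (le_max_right _ _)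
  have hbound : ∀ s ∈ Icc (0:ℝ) β₀, 0 ≤ Ylim s ∧ Ylim s ≤ Ms := by
    intro s hs
    refine ⟨hnn s hs.1, ?_⟩
    rcases le_or_gt s T₂ with h | h
    · exact le_trans (hL₂ s ⟨hs.1, h⟩).2 (le_max_left _ _)
    · rcases eq_or_lt_of_le hs.2 with h2 | h2
      · rw [h2, hYβ]; exact hMs0
      · have hmem : s ∈ Ioo t₂ β₀ := ⟨lt_of_le_of_lt (le_max_left t₂ 0) h, h2⟩
        exact le_trans (le_of_lt (hsub hmem)) (le_max_right _ _)
  have hmeas : AEMeasurable Ylim (volume.restrict (Ioc 0 β₀)) := aemeasYlim hYc hlim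
  have hYint : IntegrableOn Ylim (Ioc 0 β₀) volume :=
    integrableOn_of_bounded hmeas (fun s hs => by
      obtain ⟨h1, h2⟩ := hbound s ⟨hs.1.le, hs.2⟩
      rw [abs_of_nonneg h1]; exact h2)
  have hYii : IntervalIntegrable Ylim volume 0 β₀ :=
    (intervalIntegrable_iff_integrableOn_Ioc_of_le hβ₀pos.le).2 hYint
  set tn : ℕ → ℝ := fun n => β₀ - β₀/((n:ℝ)+2) with htn
  have htn0 : ∀ n, 0 ≤ tn n := by
    intro n
    have h1 : β₀/((n:ℝ)+2) ≤ β₀/1 :=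
      div_le_div_of_nonneg_left hβ₀pos.le one_pos (by push_cast; linarith [Nat.cast_nonneg (α := ℝ) n])
    rw [div_one] at h1
    simp only [htn]
    linarith
  have htnβ : ∀ n, tn n < β₀ := by
    intro n
    have h1 : 0 < β₀/((n:ℝ)+2) := by positivity
    simp only [htn]
    linarith
  have htnmono : Monotone tn := by
    intro m n hmn
    simp only [htn]
    have h1 : β₀/((n:ℝ)+2) ≤ β₀/((m:ℝ)+2) := by
      apply div_le_div_of_nonneg_left hβ₀pos.le (by positivity)
      have := (Nat.cast_le (α := ℝ)).2 hmn
      linarith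
    linarith
  have htnlim : Tendsto tn atTop (𝓝 β₀) := by
    have h1 : Tendsto (fun n : ℕ => β₀/((n:ℝ)+2)) atTop (𝓝 0) := by
      apply Tendsto.div_atTop tendsto_const_nhds
      exact tendsto_atTop_add_const_right _ 2 tendsto_natCast_atTop_atTop
    have h2 : Tendsto (fun n : ℕ => β₀ - β₀/((n:ℝ)+2)) atTop (𝓝 (β₀ - 0)) :=
      tendsto_const_nhds.sub h1
    simpa using h2
  have heqn : ∀ n, Ylim (tn n) = Y₀ + (∫ s in (0:ℝ)..(tn n), k/Ylim s)
      - a*(∫ s in (0:ℝ)..(tn n), Ylim s) + σ*g (tn n) := by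
    intro n
    have hposn : ∀ s ∈ Icc (0:ℝ) (tn n), 0 < Ylim s := fun s hs =>
      pos_before hβ₀ hs.1 (lt_of_le_of_lt hs.2 (htnβ n))
    exact eqOn hY₀ hk ha hσ hg hg0 hYc hYeq hlim (htn0 n) hposn (tn n) ⟨htn0 n, le_rfl⟩
  set I := ∫ s in (0:ℝ)..β₀, Ylim s with hI
  set L := -Y₀ + a*I - σ*g β₀ with hL'
  have hii1 : ∀ n, IntervalIntegrable Ylim volume 0 (tn n) := fun n =>
    hYii.mono_set (by
      rw [uIcc_of_le (htn0 n), uIcc_of_le hβ₀pos.le]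
      exact Icc_subset_Icc le_rfl (htnβ n).le)
  have hii2 : ∀ n, IntervalIntegrable Ylim volume (tn n) β₀ := fun n =>
    hYii.mono_set (by
      rw [uIcc_of_le (htnβ n).le, uIcc_of_le hβ₀pos.le]
      exact Icc_subset_Icc (htn0 n) le_rfl)
  have hIconv : Tendsto (fun n => ∫ s in (0:ℝ)..(tn n), Ylim s) atTop (𝓝 I) := by
    rw [tendsto_iff_dist_tendsto_zero]
    apply squeeze_zero (fun n => dist_nonneg) (g := fun n => Ms*(β₀ - tn n))
    · intro n
      have hsplit := intervalIntegral.integral_add_adjacent_intervals (hii1 n) (hii2 n)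
      have hnorm : ‖∫ s in (tn n)..β₀, Ylim s‖ ≤ Ms * |β₀ - tn n| := by
        apply intervalIntegral.norm_integral_le_of_norm_le_const
        intro x hx
        rw [uIoc_of_le (htnβ n).le] at hx
        obtain ⟨h1, h2⟩ := hbound x ⟨(htn0 n).trans hx.1.le, hx.2⟩
        rw [Real.norm_eq_abs, abs_of_nonneg h1]
        exact h2
      rw [Real.dist_eq]
      have he1 : (∫ s in (0:ℝ)..(tn n), Ylim s) - I = -(∫ s in (tn n)..β₀, Ylim s) := by
        rw [hI, ← hsplit]; ring
      rw [he1, abs_neg]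
      have habs : |β₀ - tn n| = β₀ - tn n := abs_of_nonneg (by linarith [htnβ n])
      rw [Real.norm_eq_abs, habs] at hnorm
      exact hnorm
    · have h1 : Tendsto (fun n => β₀ - tn n) atTop (𝓝 0) := by
        have h0 : Tendsto (fun n : ℕ => β₀ - tn n) atTop (𝓝 (β₀ - β₀)) :=
          tendsto_const_nhds.sub htnlim
        simpa using h0
      have h2 := h1.const_mul Ms
      simpa using h2
  have hFtend : Tendsto (fun n => ∫ s in (0:ℝ)..(tn n), k/Ylim s) atTop (𝓝 L) := by
    have h1 : ∀ n, (∫ s in (0:ℝ)..(tn n), k/Ylim s)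
        = Ylim (tn n) - Y₀ + a*(∫ s in (0:ℝ)..(tn n), Ylim s) - σ*g (tn n) := by
      intro n; have := heqn n; linarith
    rw [show L = 0 - Y₀ + a*I - σ*g β₀ by rw [hL']; ring]
    apply Tendsto.congr (fun n => (h1 n).symm)
    have hz : Tendsto (fun n => Ylim (tn n)) atTop (𝓝 0) := by
      apply htend.comp
      rw [tendsto_nhdsWithin_iff]
      exact ⟨htnlim, Eventually.of_forall fun n => htnβ n⟩
    have hgσ : Tendsto (fun n => σ*g (tn n)) atTop (𝓝 (σ*g β₀)) :=
      (((hg.tendsto β₀).comp htnlim)).const_mul σ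
    exact ((hz.sub tendsto_const_nhds).add (hIconv.const_mul a)).sub hgσ
  have hii : ∀ p : ℕ, IntegrableOn (fun s => k/Ylim s) (Ioc 0 (tn p)) volume := by
    intro p
    obtain ⟨δp, hδp, hδple⟩ := pos_min hg0 hk ha hYc hYeq hlim (htn0 p)
      (fun s hs => pos_before hβ₀ hs.1 (lt_of_le_of_lt hs.2 (htnβ p)))
    apply integrableOn_of_bounded (C := k/δp) (aemeasurable_const.div (aemeasYlim hYc hlim))
    intro s hs
    have h1 := hδple s ⟨hs.1.le, hs.2⟩
    have h2 : 0 ≤ k/Ylim s := div_nonneg hk.le (by linarith)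
    show |k / Ylim s| ≤ k/δp
    rw [abs_of_nonneg h2]
    exact div_le_div_of_nonneg_left hk.le hδp h1
  have hFmono : Monotone (fun n => ∫ s in (0:ℝ)..(tn n), k/Ylim s) := by
    intro m n hmn
    have hiiA : IntervalIntegrable (fun s => k/Ylim s) volume 0 (tn m) :=
      (intervalIntegrable_iff_integrableOn_Ioc_of_le (htn0 m)).2 (hii m)
    have hiiB : IntervalIntegrable (fun s => k/Ylim s) volume (tn m) (tn n) :=
      (intervalIntegrable_iff_integrableOn_Ioc_of_le (htnmono hmn)).2
        ((hii n).mono_set (Ioc_subset_Ioc (htn0 m) le_rfl))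
    have hsplit := intervalIntegral.integral_add_adjacent_intervals hiiA hiiB
    have hnn2 : 0 ≤ ∫ s in (tn m)..(tn n), k/Ylim s :=
      intervalIntegral.integral_nonneg (htnmono hmn)
        (fun x hx => div_nonneg hk.le (hnn x (le_trans (htn0 m) hx.1)))
    simp only
    linarith [hsplit, hnn2]
  have hofmono : Monotone (fun n => ENNReal.ofReal (∫ s in (0:ℝ)..(tn n), k/Ylim s)) :=
    fun m n h => ENNReal.ofReal_le_ofReal (hFmono h)
  have hsupofreal : (⨆ n, ENNReal.ofReal (∫ s in (0:ℝ)..(tn n), k/Ylim s))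
      = ENNReal.ofReal L :=
    tendsto_nhds_unique (tendsto_atTop_iSup hofmono)
      ((ENNReal.continuous_ofReal.tendsto L).comp hFtend)
  have hφmeas : AEMeasurable (fun x => ENNReal.ofReal (k/Ylim x))
      (volume.restrict (Ioc 0 β₀)) :=
    ENNReal.measurable_ofReal.comp_aemeasurable (aemeasurable_const.div (aemeasYlim hYc hlim))
  have hfn_meas : ∀ n, AEMeasurable
      ((Ioc (0:ℝ) (tn n)).indicator (fun x => ENNReal.ofReal (k/Ylim x)))
      (volume.restrict (Ioc 0 β₀)) := fun n => hφmeas.indicator measurableSet_Ioc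
  have hfnmono : ∀ᵐ x ∂(volume.restrict (Ioc (0:ℝ) β₀)),
      Monotone fun n => (Ioc (0:ℝ) (tn n)).indicator
        (fun x => ENNReal.ofReal (k/Ylim x)) x := by
    refine Eventually.of_forall fun x m n hmn => ?_
    exact Set.indicator_le_indicator_of_subset (Ioc_subset_Ioc le_rfl (htnmono hmn))
      (fun _ => zero_le) x
  have hkey := lintegral_iSup' hfn_meas hfnmono
  have hsup2 : ∀ x : ℝ, (⨆ n, (Ioc (0:ℝ) (tn n)).indicator
      (fun x => ENNReal.ofReal (k/Ylim x)) x)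
      = (Ioo (0:ℝ) β₀).indicator (fun x => ENNReal.ofReal (k/Ylim x)) x := by
    intro x
    by_cases hx : x ∈ Ioo (0:ℝ) β₀
    · rw [Set.indicator_of_mem hx]
      apply le_antisymm
      · exact iSup_le fun n => Set.indicator_le_self _ _ x
      · obtain ⟨n, hn⟩ : ∃ n : ℕ, x ≤ tn n := by
          obtain ⟨n, hn⟩ := (htnlim.eventually (lt_mem_nhds hx.2)).exists
          exact ⟨n, hn.le⟩
        calc ENNReal.ofReal (k/Ylim x)
            = (Ioc (0:ℝ) (tn n)).indicator (fun x => ENNReal.ofReal (k/Ylim x)) x :=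
              (Set.indicator_of_mem (show x ∈ Ioc (0:ℝ) (tn n) from ⟨hx.1, hn⟩)
                (fun x => ENNReal.ofReal (k/Ylim x))).symm
          _ ≤ ⨆ m, (Ioc (0:ℝ) (tn m)).indicator (fun x => ENNReal.ofReal (k/Ylim x)) x :=
              le_iSup (fun m => (Ioc (0:ℝ) (tn m)).indicator
                (fun x => ENNReal.ofReal (k/Ylim x)) x) n
    · rw [Set.indicator_of_notMem hx]
      refine le_antisymm (iSup_le fun n => ?_) zero_le
      rw [Set.indicator_of_notMem
        (fun hmem => hx ⟨hmem.1, lt_of_le_of_lt hmem.2 (htnβ n)⟩)]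
  have hLHS : ∫⁻ x, (⨆ n, (Ioc (0:ℝ) (tn n)).indicator
        (fun x => ENNReal.ofReal (k/Ylim x)) x) ∂(volume.restrict (Ioc 0 β₀))
      = ∫⁻ x in Ioc (0:ℝ) β₀, ENNReal.ofReal (k/Ylim x) ∂volume := by
    rw [lintegral_congr hsup2, lintegral_indicator measurableSet_Ioo,
      Measure.restrict_restrict measurableSet_Ioo,
      Set.inter_eq_self_of_subset_left Ioo_subset_Ioc_self,
      Measure.restrict_congr_set Ioo_ae_eq_Ioc]
  have hφnn' : ∀ p : ℕ, (0:ℝ → ℝ) ≤ᵐ[volume.restrict (Ioc (0:ℝ) (tn p))] fun x => k/Ylim x := by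
    intro p
    have h0 : ∀ᵐ x ∂(volume.restrict (Ioc (0:ℝ) (tn p))), 0 ≤ k/Ylim x :=
      (ae_restrict_iff' measurableSet_Ioc).2
        (Eventually.of_forall fun x hx => div_nonneg hk.le (hnn x hx.1.le))
    exact h0
  have hRHSn : ∀ n, ∫⁻ x, (Ioc (0:ℝ) (tn n)).indicator
        (fun x => ENNReal.ofReal (k/Ylim x)) x ∂(volume.restrict (Ioc 0 β₀))
      = ENNReal.ofReal (∫ s in (0:ℝ)..(tn n), k/Ylim s) := by
    intro n
    rw [lintegral_indicator measurableSet_Ioc,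
      Measure.restrict_restrict measurableSet_Ioc,
      Set.inter_eq_self_of_subset_left (Ioc_subset_Ioc le_rfl (htnβ n).le),
      ← ofReal_integral_eq_lintegral_ofReal (hii n) (hφnn' n),
      intervalIntegral.integral_of_le (htn0 n)]
  have hfinal : ∫⁻ x in Ioc (0:ℝ) β₀, ENNReal.ofReal (k/Ylim x) ∂volume
      = ENNReal.ofReal L := by
    rw [← hLHS, hkey]
    simp_rw [hRHSn]
    exact hsupofreal
  have hφnn : (0:ℝ → ℝ) ≤ᵐ[volume.restrict (Ioc (0:ℝ) β₀)] fun x => k/Ylim x := by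
    have h0 : ∀ᵐ x ∂(volume.restrict (Ioc (0:ℝ) β₀)), 0 ≤ k/Ylim x :=
      (ae_restrict_iff' measurableSet_Ioc).2
        (Eventually.of_forall fun x hx => div_nonneg hk.le (hnn x hx.1.le))
    exact h0
  have hint : IntegrableOn (fun x => k/Ylim x) (Ioc 0 β₀) volume := by
    refine ⟨(aemeasurable_const.div (aemeasYlim hYc hlim)).aestronglyMeasurable, ?_⟩
    rw [hasFiniteIntegral_iff_ofReal hφnn, hfinal]
    exact ENNReal.ofReal_lt_top
  have hLnn : 0 ≤ L := by
    have h1 : (∫ s in (0:ℝ)..(tn 0), k/Ylim s) ≤ L :=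
      ge_of_tendsto hFtend (Eventually.of_forall fun n => hFmono (Nat.zero_le n))
    have h2 : 0 ≤ ∫ s in (0:ℝ)..(tn 0), k/Ylim s :=
      intervalIntegral.integral_nonneg (htn0 0)
        (fun x hx => div_nonneg hk.le (hnn x hx.1))
    linarith
  have hval : (∫ s in (0:ℝ)..β₀, k/Ylim s) = L := by
    rw [intervalIntegral.integral_of_le hβ₀pos.le,
      integral_eq_lintegral_of_nonneg_ae hφnn hint.aestronglyMeasurable, hfinal,
      ENNReal.toReal_ofReal hLnn]
  rw [hYβ, hval, hL']
  ring


end CIRproof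

/-- Remarks 4 and 5: up to the first zero β₀ of the limit process Y, Y tends
to 0 at β₀, Y(β₀) = 0, and Y satisfies the square-root integral equation. -/
theorem limit_process_equation_until_first_zero
    (Y₀ k a σ : ℝ) (hY₀ : 0 < Y₀) (hk : 0 < k) (ha : 0 < a) (hσ : 0 < σ)
    (g : ℝ → ℝ) (hg : Continuous g) (hg0 : g 0 = 0)
    (Y : ℝ → ℝ → ℝ) (Ylim : ℝ → ℝ)
    (hYc : ∀ ε : ℝ, 0 < ε → Continuous (Y ε))
    (hYeq : ∀ ε : ℝ, 0 < ε → ∀ t : ℝ, 0 ≤ t →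
      Y ε t = Y₀ + (∫ s in (0:ℝ)..t, k / ((if 0 < Y ε s then Y ε s else 0) + ε))
        - a * (∫ s in (0:ℝ)..t, Y ε s) + σ * g t)
    (hlim : ∀ t : ℝ, 0 ≤ t →
      Tendsto (fun ε => Y ε t) (𝓝[>] 0) (𝓝 (Ylim t)))
    (β₀ : ℝ) (hβ₀pos : 0 < β₀)
    (hβ₀ : IsLUB {t : ℝ | 0 < t ∧ ∀ s ∈ Set.Ico (0:ℝ) t, 0 < Ylim s} β₀) :
    Tendsto Ylim (𝓝[<] β₀) (𝓝 0) ∧ Ylim β₀ = 0 ∧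
    ∀ t ∈ Set.Icc (0:ℝ) β₀,
      Ylim t = Y₀ + (∫ s in (0:ℝ)..t, k / Ylim s) - a * (∫ s in (0:ℝ)..t, Ylim s)
        + σ * g t := by
  have hYeq' : ∀ ε : ℝ, 0 < ε → ∀ t : ℝ, 0 ≤ t →
      Y ε t = Y₀ + (∫ s in (0:ℝ)..t, k / (max (Y ε s) 0 + ε))
        - a * (∫ s in (0:ℝ)..t, Y ε s) + σ * g t := by
    intro ε hε t ht
    have h := hYeq ε hε t ht
    have he : ∀ s, (if 0 < Y ε s then Y ε s else 0) = max (Y ε s) 0 := by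
      intro s
      rcases lt_or_ge 0 (Y ε s) with h2 | h2
      · rw [if_pos h2, max_eq_left h2.le]
      · rw [if_neg (not_lt.2 h2), max_eq_right h2]
    simpa only [he] using h
  have htz := CIRproof.tendsto_zero hY₀ hk ha hσ hg hg0 hYc hYeq' hlim hβ₀pos hβ₀
  have hb := CIRproof.at_beta_le hg0 hk ha hYc hYeq' hlim hβ₀pos hβ₀
  have hbz : Ylim β₀ = 0 := le_antisymm hb.2
    (CIRproof.nonneg hY₀ hk ha hσ hg hg0 hYc hYeq' hlim hβ₀pos.le)
  refine ⟨htz, hbz, ?_⟩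
  intro t htI
  rcases eq_or_lt_of_le htI.2 with h | h
  · subst h
    exact CIRproof.eq_at_beta hY₀ hk ha hσ hg hg0 hYc hYeq' hlim hβ₀pos hβ₀ hbz
  · have hpos : ∀ s ∈ Set.Icc (0:ℝ) t, 0 < Ylim s := fun s hs =>
      CIRproof.pos_before hβ₀ hs.1 (lt_of_le_of_lt hs.2 h)
    exact CIRproof.eqOn hY₀ hk ha hσ hg hg0 hYc hYeq' hlim htI.1 hpos t ⟨htI.1, le_rfl⟩
end

section
/- Let $\tilde Y_\varepsilon$ and $Y_\varepsilon$ be continuous solutions (for the same fixed continuous path $g$ and same $Y_0,k,a,\sigma>0$) of $\tilde Y_\varepsilon(t) = Y_0 + \int_0^t \frac{k}{\max\{\tilde Y_\varepsilon(s),\varepsilon\}}\,ds - a\int_0^t \tilde Y_\varepsilon(s)\,ds + \sigma g(t)$ and $Y_\varepsilon(t) = Y_0 + \int_0^t \frac{k}{Y_\varepsilon(s)\mathbf{1}_{\{Y_\varepsilon(s)>0\}}+\varepsilon}\,ds - a\int_0^t Y_\varepsilon(s)\,ds + \sigma g(t)$. Then $0 \le \tilde Y_\varepsilon(t) - Y_\varepsilon(t)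 < 2\varepsilon$ for all $t\ge 0$; consequently the limits $\tilde Y = \lim_{\varepsilon\to0}\tilde Y_\varepsilon$ and $Y = \lim_{\varepsilon\to0}Y_\varepsilon$ coincide on $[0,\infty)$. -/
open Filter Topology MeasureTheory Set

/-- Core comparison lemma: if `A - B` satisfies the integral identity for the difference of
the two ε-regularizations, then `0 ≤ A t - B t ≤ ε` on `[0, ∞)`. -/
lemma reg_diff_bounds (ε k a : ℝ) (hε : 0 < ε) (hk : 0 < k) (ha : 0 < a)
    (A B : ℝ → ℝ) (hA : Continuous A) (hB : Continuous B)
    (key : ∀ t : ℝ, 0 ≤ t → A t - B t =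
      ∫ s in (0:ℝ)..t, (k / max (A s) ε - k / (max (B s) 0 + ε) - a * (A s - B s))) :
    ∀ t : ℝ, 0 ≤ t → 0 ≤ A t - B t ∧ A t - B t ≤ ε := by
  set F : ℝ → ℝ := fun s => k / max (A s) ε - k / (max (B s) 0 + ε) - a * (A s - B s) with hF
  have hmaxA : ∀ s, (0:ℝ) < max (A s) ε := fun s => lt_of_lt_of_le hε (le_max_right _ _)
  have hmaxB : ∀ s, (0:ℝ) < max (B s) 0 + ε :=
    fun s => add_pos_of_nonneg_of_pos (le_max_right _ _) hε
  have hFc : Continuous F := by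
    apply Continuous.sub
    · apply Continuous.sub
      · exact continuous_const.div (hA.max continuous_const) (fun s => (hmaxA s).ne')
      · exact continuous_const.div ((hB.max continuous_const).add continuous_const)
          (fun s => (hmaxB s).ne')
    · exact continuous_const.mul (hA.sub hB)
  have hFint : ∀ u v : ℝ, IntervalIntegrable F volume u v := fun u v =>
    hFc.intervalIntegrable u v
  -- the difference between the two denominators
  have hden : ∀ x : ℝ, max x ε ≤ max x 0 + ε := fun x =>
    max_le (le_add_of_le_of_nonneg (le_max_left x 0) hε.le)
      (le_add_of_nonneg_left (le_max_right x 0))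
  have hshift : ∀ x : ℝ, max x 0 + ε ≤ max (x + ε) ε := fun x =>
    add_le_of_le_sub_right (max_le (le_sub_iff_add_le.mpr (le_max_left _ _))
      (le_sub_iff_add_le.mpr (by simpa using le_max_right (x + ε) ε)))
  -- antitonicity of k / max · ε
  have hmono : ∀ x y : ℝ, x ≤ y → k / max y ε ≤ k / max x ε := fun x y h =>
    div_le_div_of_nonneg_left hk.le (lt_of_lt_of_le hε (le_max_right x ε))
      (max_le_max h le_rfl)
  -- Sign facts for F
  have hFpos : ∀ s, A s - B s < 0 → 0 < F s := by
    intro s hs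
    have h1 : k / (max (B s) 0 + ε) ≤ k / max (B s) ε :=
      div_le_div_of_nonneg_left hk.le (lt_of_lt_of_le hε (le_max_right _ _)) (hden _)
    have h2 : k / max (B s) ε ≤ k / max (A s) ε := hmono _ _ (by linarith)
    have h3 : 0 < -(a * (A s - B s)) := by nlinarith
    simp only [hF]; linarith
  have hFneg : ∀ s, ε < A s - B s → F s < 0 := by
    intro s hs
    have h1 : k / max (A s) ε ≤ k / max (B s + ε) ε := hmono _ _ (by linarith)
    have h2 : k / max (B s + ε) ε ≤ k / (max (B s) 0 + ε) :=
      div_le_div_of_nonneg_left hk.le (hmaxB s) (hshift _)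
    have h3 : a * ε < a * (A s - B s) := by nlinarith
    simp only [hF]; nlinarith
  intro t ht
  constructor
  · -- lower bound
    by_contra hcon
    push_neg at hcon
    have ht0 : t ≠ 0 := by
      intro h; rw [h] at hcon
      have := key 0 le_rfl; simp [intervalIntegral.integral_same] at this; linarith
    have htpos : 0 < t := lt_of_le_of_ne ht (Ne.symm ht0)
    set S : Set ℝ := {s | s ∈ Icc (0:ℝ) t ∧ 0 ≤ A s - B s} with hS
    have hSclosed : IsClosed S := by
      apply IsClosed.inter isClosed_Icc
      exact isClosed_le continuous_const (hA.sub hB)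
    have h0S : (0:ℝ) ∈ S := by
      refine ⟨⟨le_rfl, ht⟩, ?_⟩
      have := key 0 le_rfl; simp [intervalIntegral.integral_same] at this; linarith
    have hSbdd : BddAbove S := ⟨t, fun x hx => hx.1.2⟩
    set τ := sSup S with hτ
    have hτS : τ ∈ S := hSclosed.csSup_mem ⟨0, h0S⟩ hSbdd
    have hτ0 : 0 ≤ τ := hτS.1.1
    have hτt : τ ≤ t := hτS.1.2
    have hτlt : τ < t := lt_of_le_of_ne hτt (fun h => by rw [h] at hτS; linarith [hτS.2])
    have hmid : ∀ s, s ∈ Ioo τ t → 0 < F s := by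
      intro s hs
      apply hFpos
      by_contra hge
      push_neg at hge
      exact absurd (le_csSup hSbdd (⟨⟨le_trans hτ0 hs.1.le, hs.2.le⟩, hge⟩ : s ∈ S)) (not_le.mpr hs.1)
    have hint : 0 < ∫ s in τ..t, F s :=
      intervalIntegral.intervalIntegral_pos_of_pos_on (hFint τ t) hmid hτlt
    have hsub : (A t - B t) - (A τ - B τ) = ∫ s in τ..t, F s := by
      rw [key t ht, key τ hτ0]
      exact intervalIntegral.integral_interval_sub_left (hFint 0 t) (hFint 0 τ)
    have := hτS.2
    linarith
  · -- upper bound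
    by_contra hcon
    push_neg at hcon
    have ht0 : t ≠ 0 := by
      intro h; rw [h] at hcon
      have := key 0 le_rfl; simp [intervalIntegral.integral_same] at this; linarith
    have htpos : 0 < t := lt_of_le_of_ne ht (Ne.symm ht0)
    set S : Set ℝ := {s | s ∈ Icc (0:ℝ) t ∧ A s - B s ≤ ε} with hS
    have hSclosed : IsClosed S := by
      apply IsClosed.inter isClosed_Icc
      exact isClosed_le (hA.sub hB) continuous_const
    have h0S : (0:ℝ) ∈ S := by
      refine ⟨⟨le_rfl, ht⟩, ?_⟩
      have := key 0 le_rfl; simp [intervalIntegral.integral_same] at this; linarith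
    have hSbdd : BddAbove S := ⟨t, fun x hx => hx.1.2⟩
    set τ := sSup S with hτ
    have hτS : τ ∈ S := hSclosed.csSup_mem ⟨0, h0S⟩ hSbdd
    have hτ0 : 0 ≤ τ := hτS.1.1
    have hτt : τ ≤ t := hτS.1.2
    have hτlt : τ < t := lt_of_le_of_ne hτt (fun h => by rw [h] at hτS; linarith [hτS.2])
    have hmid : ∀ s, s ∈ Ioo τ t → 0 < (fun s => -F s) s := by
      intro s hs
      have : ε < A s - B s := by
        by_contra hge
        push_neg at hge
        exact absurd (le_csSup hSbdd (⟨⟨le_trans hτ0 hs.1.le, hs.2.le⟩, hge⟩ : s ∈ S))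
          (not_le.mpr hs.1)
      simpa using hFneg s this
    have hint : 0 < ∫ s in τ..t, -F s :=
      intervalIntegral.intervalIntegral_pos_of_pos_on ((hFint τ t).neg) hmid hτlt
    rw [intervalIntegral.integral_neg] at hint
    have hsub : (A t - B t) - (A τ - B τ) = ∫ s in τ..t, F s := by
      rw [key t ht, key τ hτ0]
      exact intervalIntegral.integral_interval_sub_left (hFint 0 t) (hFint 0 τ)
    have := hτS.2
    linarith

/-- Remark 6: the two ε-regularizations differ by at most 2ε pathwise, so the
limit square root processes coincide. -/
theorem regularizations_coincide
    (Y₀ k a σ : ℝ) (hY₀ : 0 < Y₀) (hk : 0 < k) (ha : 0 < a) (hσ : 0 < σ)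
    (g : ℝ → ℝ) (hg : Continuous g) (hg0 : g 0 = 0)
    (Y Yt : ℝ → ℝ → ℝ) (Ylim Ytlim : ℝ → ℝ)
    (hYc : ∀ ε : ℝ, 0 < ε → Continuous (Y ε))
    (hYtc : ∀ ε : ℝ, 0 < ε → Continuous (Yt ε))
    (hYeq : ∀ ε : ℝ, 0 < ε → ∀ t : ℝ, 0 ≤ t →
      Y ε t = Y₀ + (∫ s in (0:ℝ)..t, k / ((if 0 < Y ε s then Y ε s else 0) + ε))
        - a * (∫ s in (0:ℝ)..t, Y ε s) + σ * g t)
    (hYteq : ∀ ε : ℝ, 0 < ε → ∀ t : ℝ, 0 ≤ t →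
      Yt ε t = Y₀ + (∫ s in (0:ℝ)..t, k / max (Yt ε s) ε)
        - a * (∫ s in (0:ℝ)..t, Yt ε s) + σ * g t)
    (hlim : ∀ t : ℝ, 0 ≤ t →
      Tendsto (fun ε => Y ε t) (𝓝[>] 0) (𝓝 (Ylim t)))
    (htlim : ∀ t : ℝ, 0 ≤ t →
      Tendsto (fun ε => Yt ε t) (𝓝[>] 0) (𝓝 (Ytlim t))) :
    (∀ ε : ℝ, 0 < ε → ∀ t : ℝ, 0 ≤ t →
      0 ≤ Yt ε t - Y ε t ∧ Yt ε t - Y ε t < 2 * ε) ∧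
    ∀ t : ℝ, 0 ≤ t → Ytlim t = Ylim t := by
  have main : ∀ ε : ℝ, 0 < ε → ∀ t : ℝ, 0 ≤ t →
      0 ≤ Yt ε t - Y ε t ∧ Yt ε t - Y ε t ≤ ε := by
    intro ε hε
    have hite : ∀ s, k / ((if 0 < Y ε s then Y ε s else 0) + ε) = k / (max (Y ε s) 0 + ε) := by
      intro s
      congr 1
      split_ifs with h
      · rw [max_eq_left h.le]
      · rw [max_eq_right (not_lt.mp h)]
    have hmaxA : ∀ s, (0:ℝ) < max (Yt ε s) ε := fun s => lt_of_lt_of_le hε (le_max_right _ _)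
    have hmaxB : ∀ s, (0:ℝ) < max (Y ε s) 0 + ε :=
      fun s => add_pos_of_nonneg_of_pos (le_max_right _ _) hε
    have hc1 : Continuous fun s => k / max (Yt ε s) ε :=
      continuous_const.div ((hYtc ε hε).max continuous_const) (fun s => (hmaxA s).ne')
    have hc2 : Continuous fun s => k / (max (Y ε s) 0 + ε) :=
      continuous_const.div (((hYc ε hε).max continuous_const).add continuous_const)
        (fun s => (hmaxB s).ne')
    have key : ∀ t : ℝ, 0 ≤ t → Yt ε t - Y ε t =
        ∫ s in (0:ℝ)..t, (k / max (Yt ε s) ε - k / (max (Y ε s) 0 + ε)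
          - a * (Yt ε s - Y ε s)) := by
      intro t ht
      have i1 : IntervalIntegrable (fun s => k / max (Yt ε s) ε) volume 0 t :=
        hc1.intervalIntegrable 0 t
      have i2 : IntervalIntegrable (fun s => k / (max (Y ε s) 0 + ε)) volume 0 t :=
        hc2.intervalIntegrable 0 t
      have i3 : IntervalIntegrable (fun s => a * (Yt ε s - Y ε s)) volume 0 t :=
        (continuous_const.mul ((hYtc ε hε).sub (hYc ε hε))).intervalIntegrable 0 t
      have i4 : IntervalIntegrable (Yt ε) volume 0 t := (hYtc ε hε).intervalIntegrable 0 t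
      have i5 : IntervalIntegrable (Y ε) volume 0 t := (hYc ε hε).intervalIntegrable 0 t
      rw [intervalIntegral.integral_sub (i1.sub i2) i3, intervalIntegral.integral_sub i1 i2]
      have hmul : (∫ s in (0:ℝ)..t, a * (Yt ε s - Y ε s))
          = a * (∫ s in (0:ℝ)..t, Yt ε s) - a * (∫ s in (0:ℝ)..t, Y ε s) := by
        rw [intervalIntegral.integral_const_mul, intervalIntegral.integral_sub i4 i5]
        ring
      rw [hmul, hYteq ε hε t ht, hYeq ε hε t ht]
      simp only [hite]
      ring
    exact reg_diff_bounds ε k a hε hk ha (Yt ε) (Y ε) (hYtc ε hε) (hYc ε hε) key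
  constructor
  · intro ε hε t ht
    obtain ⟨h1, h2⟩ := main ε hε t ht
    exact ⟨h1, lt_of_le_of_lt h2 (by linarith)⟩
  · intro t ht
    have hten : Tendsto (fun ε => Yt ε t - Y ε t) (𝓝[>] (0:ℝ)) (𝓝 (Ytlim t - Ylim t)) :=
      (htlim t ht).sub (hlim t ht)
    have hten0 : Tendsto (fun ε => Yt ε t - Y ε t) (𝓝[>] (0:ℝ)) (𝓝 0) := by
      have hlow : ∀ᶠ ε in 𝓝[>] (0:ℝ), 0 ≤ Yt ε t - Y ε t :=
        eventually_nhdsWithin_of_forall (fun ε hε => (main ε hε t ht).1)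
      have hhigh : ∀ᶠ ε in 𝓝[>] (0:ℝ), Yt ε t - Y ε t ≤ ε :=
        eventually_nhdsWithin_of_forall (fun ε hε => (main ε hε t ht).2)
      have hid : Tendsto (fun ε : ℝ => ε) (𝓝[>] (0:ℝ)) (𝓝 0) :=
        tendsto_id.mono_left nhdsWithin_le_nhds
      exact tendsto_of_tendsto_of_tendsto_of_le_of_le' tendsto_const_nhds hid hlow hhigh
    have := tendsto_nhds_unique hten hten0
    linarith
end
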